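/- Let g : U' → U be a universal homeomorphism of normal integral varieties over a perfect field k of characteristic p > 0. Then for s sufficiently large there exists a universal homeomorphism h : U → U'^{(σ)} (where σ is the s-th power of Frobenius on k) such that g^{(σ)} ∘ h equals the s-th relative Frobenius F^s_{U/k} : U → U^{(σ)}. -/

import Mathlib

/-!
STATEMENT 8. Ring-theoretic model (for affine pieces).  A universal homeomorphism
`g : U' → U` of normal integral varieties over a perfect field `k` of characteristic
`p > 0` corresponds to a finite injective `k`-algebra map `g* : A → A'` between normal
finitely generated `k`-domains (`A = 𝒪(U)`, `A' = 𝒪(U')`) which is radicial: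
every `x ∈ A'` has a `p`-power `x ^ p ^ n` in the image of `g*`.  The conclusion — the
existence, for `s` large, of a universal homeomorphism `h : U → U'^{(σ)}` with
`g^{(σ)} ∘ h = F^s_{U/k}` (and also `h ∘ g = F^s_{U'/k}`) — becomes, after untwisting by
the `s`-th power of the Frobenius of `k` (an automorphism, `k` being perfect): there is a
ring homomorphism `ψ : A' → A` with `ψ ∘ g* = Frob^s` on `A` and `g* ∘ ψ = Frob^s` on `A'`.
-/
theorem frobenius_factors_through_universal_homeomorphism
    (p : ℕ) [Fact p.Prime]
    (k : Type*) [Field k] [CharP k p] [PerfectRing k p]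
    (A A' : Type*) [CommRing A] [CommRing A'] [IsDomain A] [IsDomain A']
    [Algebra k A] [Algebra k A'] [Algebra.FiniteType k A] [Algebra.FiniteType k A']
    [CharP A p] [CharP A' p]
    [IsIntegrallyClosed A] [IsIntegrallyClosed A']          -- U and U' are normal
    (g : A →ₐ[k] A')                                       -- comorphism of g : U' → U
    (hfin : g.toRingHom.Finite)                             -- g is finite
    (hinj : Function.Injective g)                           -- g is dominant (surjective)
    (hrad : ∀ x : A', ∃ n : ℕ, x ^ p ^ n ∈ g.range) :       -- g is radicial
    ∃ s : ℕ, ∃ ψ : A' →+* A,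
      (∀ a : A, ψ (g a) = a ^ p ^ s) ∧ (∀ x : A', g (ψ x) = x ^ p ^ s) := by
  obtain ⟨S, hS⟩ := Algebra.FiniteType.out (R := k) (A := A')
  choose n hn using hrad
  refine ⟨S.sup n, ?_⟩
  set s := S.sup n with hs
  have hmem : ∀ x : A', x ^ p ^ s ∈ g.range := by
    let B : Subalgebra k A' :=
      { carrier := {x | x ^ p ^ s ∈ g.range}
        add_mem' := by
          intro a b ha hb
          have ha' : a ^ p ^ s ∈ g.range := ha
          have hb' : b ^ p ^ s ∈ g.range := hb
          show (a + b) ^ p ^ s ∈ g.range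
          rw [add_pow_char_pow]
          exact add_mem ha' hb'
        mul_mem' := by
          intro a b ha hb
          have ha' : a ^ p ^ s ∈ g.range := ha
          have hb' : b ^ p ^ s ∈ g.range := hb
          show (a * b) ^ p ^ s ∈ g.range
          rw [mul_pow]
          exact mul_mem ha' hb'
        algebraMap_mem' := by
          intro c
          refine ⟨algebraMap k A (c ^ p ^ s), ?_⟩
          simp [AlgHom.commutes, map_pow] }
    have hSB : (↑S : Set A') ⊆ B := by
      intro x hx
      have h1 : x ^ p ^ n x ∈ g.range := hn x
      have h2 : n x ≤ s := Finset.le_sup hx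
      have : x ^ p ^ s = (x ^ p ^ n x) ^ p ^ (s - n x) := by
        rw [← pow_mul, ← pow_add, Nat.add_sub_cancel' h2]
      show x ^ p ^ s ∈ g.range
      rw [this]
      exact pow_mem h1 _
    have : (⊤ : Subalgebra k A') ≤ B := hS ▸ Algebra.adjoin_le hSB
    intro x
    exact this (by trivial)
  let e : A ≃ₐ[k] g.range := AlgEquiv.ofInjective g hinj
  let ψ : A' →+* A :=
    e.symm.toRingEquiv.toRingHom.comp ((iterateFrobenius A' p s).codRestrict g.range hmem)
  have hψ : ∀ x : A', g (ψ x) = x ^ p ^ s := by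
    intro x
    have : g (e.symm ⟨x ^ p ^ s, hmem x⟩) = (⟨x ^ p ^ s, hmem x⟩ : g.range) := by
      have := e.apply_symm_apply ⟨x ^ p ^ s, hmem x⟩
      exact congrArg Subtype.val this
    have hc : (iterateFrobenius A' p s).codRestrict g.range hmem x = ⟨x ^ p ^ s, hmem x⟩ :=
      Subtype.ext (by show iterateFrobenius A' p s x = x ^ p ^ s; exact iterateFrobenius_def ..)
    simpa [ψ, hc] using this
  refine ⟨ψ, fun a => ?_, hψ⟩
  apply hinj
  rw [hψ, map_pow]
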